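/- Let ψ be a multiplicative character on F_q and ψ' its lift to F_{q^r} via the norm map. Then ψ' is a multiplicative character on F_{q^r} having the same order as ψ. Moreover, a character λ on F_{q^r} equals the lift of some character on F_q if and only if the order of λ divides q-1. -/

import Mathlib

open Finset

private lemma geom_aux (q : ℕ) (hq : 1 ≤ q) :
    ∀ r : ℕ, (∑ i ∈ range r, q ^ i) * (q - 1) = q ^ r - 1 := by
  intro r
  induction r with
  | zero => simp
  | succ r ih =>
    rw [sum_range_succ, add_mul, ih]
    have ha : 1 ≤ q ^ r := Nat.one_le_pow _ _ hq
    have hb : q ^ r * (q - 1) = q ^ r * q - q ^ r := by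
      rw [Nat.mul_sub, mul_one]
    have hc : q ^ r ≤ q ^ r * q := Nat.le_mul_of_pos_right _ hq
    rw [pow_succ]
    omega

private lemma norm_pow_aux {F E : Type*} [Field F] [Fintype F] [Field E] [Fintype E]
    [Algebra F E] {r : ℕ} (hr : 0 < r) (hE : Fintype.card E = Fintype.card F ^ r) (x : E) :
    algebraMap F E (Algebra.norm F x) = x ^ (∑ i ∈ range r, Fintype.card F ^ i) := by
  set q := Fintype.card F with hq_def
  have hq : 1 < q := Fintype.one_lt_card
  have hrank : Module.finrank F E = r := by
    have h2 : Fintype.card E = q ^ Module.finrank F E := Module.card_eq_pow_finrank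
    rw [hE] at h2
    exact Nat.pow_right_injective hq h2.symm
  obtain ⟨p, hp⟩ := CharP.exists F
  haveI : CharP E p := charP_of_injective_algebraMap (algebraMap F E).injective p
  obtain ⟨k, hpp, hcard⟩ := FiniteField.card F p
  haveI : Fact p.Prime := ⟨hpp⟩
  -- Frobenius algebra equivalence
  let φ₀ : E →ₐ[F] E :=
    { toRingHom := iterateFrobenius E p k
      commutes' := fun a => by
        show iterateFrobenius E p k (algebraMap F E a) = algebraMap F E a
        rw [iterateFrobenius_def, ← map_pow, ← hcard, FiniteField.pow_card] }
  have hφ₀ : ∀ y : E, φ₀ y = y ^ q := fun y => by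
    show iterateFrobenius E p k y = y ^ q
    rw [iterateFrobenius_def, hq_def, hcard]
  let φ : E ≃ₐ[F] E := AlgEquiv.ofBijective φ₀
    ((Finite.injective_iff_bijective).mp (φ₀.toRingHom.injective))
  have hφ : ∀ y : E, φ y = y ^ q := hφ₀
  have hφpow : ∀ (i : ℕ) (y : E), (φ ^ i) y = y ^ q ^ i := by
    intro i
    induction i with
    | zero => intro y; simp
    | succ i ih =>
      intro y
      rw [pow_succ, AlgEquiv.mul_apply, hφ, ih, ← pow_mul, ← pow_succ']
  have hφr : φ ^ r = 1 := by
    apply AlgEquiv.ext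
    intro y
    rw [hφpow, ← hE, FiniteField.pow_card, AlgEquiv.one_apply]
  have hfin : IsOfFinOrder φ := isOfFinOrder_iff_pow_eq_one.mpr ⟨r, hr, hφr⟩
  have horder : orderOf φ = r := by
    have h1 : orderOf φ ∣ r := orderOf_dvd_of_pow_eq_one hφr
    have hd0 : 0 < orderOf φ := hfin.orderOf_pos
    set d := orderOf φ with hd_def
    have hler : r ≤ d := by
      obtain ⟨g, hg⟩ := IsCyclic.exists_generator (α := Eˣ)
      have hφd : φ ^ d = 1 := pow_orderOf_eq_one φ
      have hgE : ((g : E)) ^ q ^ d = (g : E) := by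
        have := AlgEquiv.congr_fun hφd (g : E)
        rwa [hφpow, AlgEquiv.one_apply] at this
      have hgu : g ^ q ^ d = g := Units.ext (by rw [Units.val_pow_eq_pow_val]; exact hgE)
      have hgd : g ^ (q ^ d - 1) = 1 := by
        have h1q : 1 ≤ q ^ d := Nat.one_le_pow _ _ (by omega)
        have : g ^ (q ^ d - 1) * g = 1 * g := by
          rw [← pow_succ, one_mul]
          rw [Nat.sub_add_cancel h1q]
          exact hgu
        exact mul_right_cancel this
      have hog : orderOf g = q ^ r - 1 := by
        rw [orderOf_eq_card_of_forall_mem_zpowers hg, Nat.card_units,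
          Nat.card_eq_fintype_card, hE]
      have hdvd : q ^ r - 1 ∣ q ^ d - 1 := hog ▸ orderOf_dvd_of_pow_eq_one hgd
      have hqd1 : 0 < q ^ d - 1 := by
        have : q ≤ q ^ d := Nat.le_self_pow (by omega) q
        omega
      have hle : q ^ r - 1 ≤ q ^ d - 1 := Nat.le_of_dvd hqd1 hdvd
      have : q ^ r ≤ q ^ d := by
        have h1r : 1 ≤ q ^ r := Nat.one_le_pow _ _ (by omega)
        omega
      exact (Nat.pow_le_pow_iff_right hq).mp this
    exact le_antisymm (Nat.le_of_dvd hr h1) hler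
  have hcardG : Nat.card (E ≃ₐ[F] E) = r := by
    rw [IsGalois.card_aut_eq_finrank, hrank]
  have htop : ∀ σ : E ≃ₐ[F] E, σ ∈ Subgroup.zpowers φ := by
    have : Subgroup.zpowers φ = ⊤ :=
      Subgroup.eq_top_of_card_eq _ (by rw [Nat.card_zpowers, horder, hcardG])
    intro σ; rw [this]; trivial
  -- the bijection Fin r ≃ Galois group
  have hbij : Function.Bijective (fun i : Fin r => φ ^ (i : ℕ)) := by
    constructor
    · intro i j hij
      have := pow_injOn_Iio_orderOf (x := φ) (by rw [horder]; exact Set.mem_Iio.mpr i.isLt)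
        (by rw [horder]; exact Set.mem_Iio.mpr j.isLt) hij
      exact Fin.ext this
    · intro σ
      obtain ⟨m, hm⟩ := mem_powers_iff_mem_zpowers.mpr (htop σ)
      refine ⟨⟨m % r, Nat.mod_lt _ hr⟩, ?_⟩
      simpa [← horder, pow_mod_orderOf] using hm
  calc algebraMap F E (Algebra.norm F x) = ∏ σ : E ≃ₐ[F] E, σ x :=
        Algebra.norm_eq_prod_automorphisms F x
    _ = ∏ i : Fin r, (φ ^ (i : ℕ)) x := by
        rw [← Fintype.prod_bijective _ hbij (fun i => ((fun i : Fin r => φ ^ (i : ℕ)) i) x)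
          (fun σ => σ x) (fun i => rfl)]
    _ = ∏ i : Fin r, x ^ q ^ (i : ℕ) := by simp_rw [hφpow]
    _ = ∏ i ∈ range r, x ^ q ^ i := Fin.prod_univ_eq_prod_range (fun i => x ^ q ^ i) r
    _ = x ^ (∑ i ∈ range r, q ^ i) := Finset.prod_pow_eq_pow_sum _ _ _

theorem stmt9 (r : ℕ) (hr : 0 < r)
    (F E : Type*) [Field F] [Fintype F] [Field E] [Fintype E] [Algebra F E]
    (hE : Fintype.card E = Fintype.card F ^ r) :
    (∀ ψ : MulChar F ℂ, ∃ ψ' : MulChar E ℂ,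
      (∀ x : E, ψ' x = ψ (Algebra.norm F x)) ∧ orderOf ψ' = orderOf ψ) ∧
    (∀ lam : MulChar E ℂ,
      (∃ ψ : MulChar F ℂ, ∀ x : E, lam x = ψ (Algebra.norm F x)) ↔
        orderOf lam ∣ Fintype.card F - 1) := by
  classical
  set q := Fintype.card F with hq_def
  have hq : 1 < q := Fintype.one_lt_card
  set n := ∑ i ∈ range r, q ^ i with hn_def
  have hnorm : ∀ x : E, algebraMap F E (Algebra.norm F x) = x ^ n :=
    norm_pow_aux hr hE
  have hgeom : n * (q - 1) = q ^ r - 1 := geom_aux q hq.le r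
  have hn0 : 0 < n := by
    calc 0 < q ^ 0 := Nat.one_le_pow _ _ (by omega)
      _ ≤ n := Finset.single_le_sum (f := fun i => q ^ i)
          (fun i _ => Nat.zero_le _) (mem_range.mpr hr)
  have hainj : Function.Injective (algebraMap F E) := (algebraMap F E).injective
  -- the norm as a map on units
  set Nm : Eˣ →* Fˣ := Units.map (Algebra.norm F : E →* F) with hNm_def
  have hNm_coe : ∀ u : Eˣ, (Nm u : F) = Algebra.norm F (u : E) := fun u => rfl
  have hNmu : ∀ u : Eˣ, algebraMap F E (Nm u : F) = (u : E) ^ n := fun u => by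
    rw [hNm_coe, hnorm]
  -- cardinality of units
  obtain ⟨g, hg⟩ := IsCyclic.exists_generator (α := Eˣ)
  have hog : orderOf g = q ^ r - 1 := by
    rw [orderOf_eq_card_of_forall_mem_zpowers hg, Nat.card_units,
      Nat.card_eq_fintype_card, hE]
  -- the embedding of units of F into units of E
  set ι : Fˣ →* Eˣ := Units.map (algebraMap F E : F →* E) with hι_def
  have hιinj : Function.Injective ι := Units.map_injective hainj
  have hι_coe : ∀ v : Fˣ, (ι v : E) = algebraMap F E (v : F) := fun v => rfl
  -- order of Nm g
  have hιNg : ι (Nm g) = g ^ n := by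
    apply Units.ext
    rw [hι_coe, hNmu, Units.val_pow_eq_pow_val]
  have hndvd : n ∣ q ^ r - 1 := ⟨q - 1, hgeom.symm⟩
  have hoNg : orderOf (Nm g) = q - 1 := by
    have h1 : orderOf (ι (Nm g)) = orderOf (Nm g) := orderOf_injective ι hιinj _
    rw [← h1, hιNg, orderOf_pow, hog, Nat.gcd_eq_right hndvd]
    rw [← hgeom, Nat.mul_div_cancel_left _ hn0]
  -- surjectivity of Nm
  have hsurj : Function.Surjective Nm := by
    have htop : Subgroup.zpowers (Nm g) = ⊤ := by
      apply Subgroup.eq_top_of_card_eq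
      rw [Nat.card_zpowers, hoNg, Nat.card_units, Nat.card_eq_fintype_card]
    intro v
    have hv : v ∈ Subgroup.zpowers (Nm g) := htop ▸ Subgroup.mem_top v
    obtain ⟨m, hm⟩ := hv
    exact ⟨g ^ m, by rw [map_zpow]; exact hm⟩
  -- kernel of Nm consists of (q-1)-th powers
  have hker : ∀ u : Eˣ, Nm u = 1 → ∃ y : Eˣ, y ^ (q - 1) = u := by
    intro u hu
    have hun : u ^ n = 1 := by
      apply Units.ext
      rw [Units.val_pow_eq_pow_val, ← hNmu, hu]
      simp
    obtain ⟨m, hm0⟩ := mem_powers_iff_mem_zpowers.mpr (hg u)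
    have hm : g ^ m = u := hm0
    have hgmn : g ^ (m * n) = 1 := by rw [pow_mul, hm, hun]
    have hdvd : q ^ r - 1 ∣ m * n := hog ▸ orderOf_dvd_of_pow_eq_one hgmn
    rw [← hgeom] at hdvd
    have hdvd2 : (q - 1) ∣ m := by
      have : n * (q - 1) ∣ n * m := by
        rwa [mul_comm m n] at hdvd
      exact (mul_dvd_mul_iff_left (by omega : n ≠ 0)).mp this
    obtain ⟨t, ht⟩ := hdvd2
    exact ⟨g ^ t, by rw [← pow_mul, mul_comm t, ← ht, hm]⟩
  -- units of E are nonzero etc.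
  haveI : Nontrivial E := inferInstance
  -- the lift as a function on characters
  have hnormUnit : ∀ {x : E}, IsUnit x → IsUnit (Algebra.norm F x) := by
    intro x hx
    rcases hx with ⟨u, rfl⟩
    exact ⟨Nm u, (hNm_coe u).symm ▸ rfl⟩
  have hnorm0 : (Algebra.norm F (0 : E)) = 0 := Algebra.norm_zero
  let liftFun : MulChar F ℂ → MulChar E ℂ := fun ψ =>
    { toFun := fun x => ψ (Algebra.norm F x)
      map_one' := by
        show ψ (Algebra.norm F (1 : E)) = 1
        rw [map_one, map_one]
      map_mul' := fun x y => by
        show ψ (Algebra.norm F (x * y)) = ψ (Algebra.norm F x) * ψ (Algebra.norm F y)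
        rw [map_mul, map_mul]
      map_nonunit' := fun a ha => by
        show ψ (Algebra.norm F a) = 0
        have ha0 : a = 0 := by
          by_contra h
          exact ha (Ne.isUnit h)
        rw [ha0, hnorm0]
        exact MulChar.map_nonunit ψ (by simp) }
  have hliftFun_apply : ∀ (ψ : MulChar F ℂ) (x : E), liftFun ψ x = ψ (Algebra.norm F x) :=
    fun ψ x => rfl
  let liftHom : MulChar F ℂ →* MulChar E ℂ :=
    { toFun := liftFun
      map_one' := by
        apply MulChar.ext
        intro a
        rw [hliftFun_apply, MulChar.one_apply_coe]
        exact MulChar.one_apply (hnormUnit a.isUnit)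
      map_mul' := fun ψ₁ ψ₂ => by
        apply MulChar.ext
        intro a
        rw [MulChar.mul_apply, hliftFun_apply, hliftFun_apply, hliftFun_apply,
          MulChar.mul_apply] }
  have hliftInj : Function.Injective liftHom := by
    rw [injective_iff_map_eq_one]
    intro ψ hψ
    apply MulChar.ext
    intro v
    obtain ⟨u, hu⟩ := hsurj v
    have h1 : liftFun ψ (u : E) = 1 := by
      show liftHom ψ (u : E) = 1
      rw [hψ, MulChar.one_apply_coe]
    rw [hliftFun_apply, ← hNm_coe, hu] at h1
    rw [h1, MulChar.one_apply_coe]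
  refine ⟨fun ψ => ⟨liftHom ψ, fun x => rfl, orderOf_injective liftHom hliftInj ψ⟩, ?_⟩
  intro lam
  constructor
  · rintro ⟨ψ, hψ⟩
    have hlam : lam = liftHom ψ := MulChar.ext fun a => hψ a
    rw [hlam, orderOf_injective liftHom hliftInj ψ]
    apply orderOf_dvd_of_pow_eq_one
    apply MulChar.ext
    intro a
    have hpow : (a : F) ^ (q - 1) = 1 := by
      have h2 : a ^ (q - 1) = 1 := by
        have h3 := pow_card_eq_one (x := a)
        rwa [Fintype.card_units] at h3
      rw [← Units.val_pow_eq_pow_val, h2, Units.val_one]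
    rw [MulChar.pow_apply' ψ (by omega) (a : F), MulChar.one_apply_coe,
      ← map_pow, hpow, map_one]
  · intro hdvd
    have hlam1 : lam ^ (q - 1) = 1 := orderOf_dvd_iff_pow_eq_one.mp hdvd
    set lamu : Eˣ →* ℂˣ := MulChar.equivToUnitHom lam with hlamu_def
    have hlamu_coe : ∀ u : Eˣ, (lamu u : ℂ) = lam (u : E) :=
      fun u => MulChar.coe_equivToUnitHom lam u
    have hker_le : Nm.ker ≤ lamu.ker := by
      intro u hu
      rw [MonoidHom.mem_ker] at hu ⊢
      obtain ⟨y, hy⟩ := hker u hu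
      apply Units.ext
      rw [← hy, hlamu_coe, Units.val_pow_eq_pow_val, map_pow,
        ← MulChar.pow_apply' lam (by omega : q - 1 ≠ 0), hlam1, Units.val_one]
      exact MulChar.one_apply y.isUnit
    set ψu : Fˣ →* ℂˣ :=
      Nm.liftOfRightInverse (Function.surjInv hsurj)
        (Function.rightInverse_surjInv hsurj) ⟨lamu, hker_le⟩ with hψu_def
    have hψu : ∀ u : Eˣ, ψu (Nm u) = lamu u := fun u =>
      Nm.liftOfRightInverse_comp_apply _ _ ⟨lamu, hker_le⟩ u
    refine ⟨MulChar.ofUnitHom ψu, fun x => ?_⟩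
    by_cases hx : x = 0
    · subst hx
      rw [hnorm0]
      rw [MulChar.map_nonunit lam (by simp), MulChar.map_nonunit _ (by simp)]
    · set u : Eˣ := Units.mk0 x hx with hu_def
      have hxu : x = (u : E) := rfl
      rw [hxu, ← hNm_coe u, MulChar.ofUnitHom_coe, hψu, hlamu_coe]
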